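/- arXiv:1404.0034 — 5 statements merged into one kernel-verified Lean document; each statement's English description precedes it below -/
import Mathlib

section
/- Let T be a norm on ℝ³ differentiable away from 0, let Σ ⊆ ℝ² be open, let X : Σ → ℝ³ be a smooth immersion, and let ξ : Σ → ℝ³ be smooth with T(ξ(p)) = 1 and (fderiv T (ξ(p))) ∘ (fderiv X p) = 0 for all p ∈ Σ. Then for every smooth function ρ : Σ → ℝ, the map Y : Σ → ℝ³ × ℝ, Y(p) = (X(p) + ρ(p)·ξ(p), ρ(p)), is an anisotropic sphere congruence enveloped by X: for all p ∈ Σ, (i) L(Y(p) − (X(p),0)) = 0, and (ii) the composition of the derivative of L at the point Y(p) − (X(p),0) with the derivative of p ↦ (X(p),0) vanishes. -/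
/-- The conical Finsler metric `L(x,t) = T(x)² − t²`. -/
noncomputable def coneMetric (T : EuclideanSpace ℝ (Fin 3) → ℝ) :
    EuclideanSpace ℝ (Fin 3) × ℝ → ℝ :=
  fun q => (T q.1) ^ 2 - q.2 ^ 2

/-- A norm on `ℝ³` is bounded by a multiple of the Euclidean norm. -/
lemma norm_comparison (T : EuclideanSpace ℝ (Fin 3) → ℝ)
    (hT0 : ∀ x, 0 ≤ T x)
    (hT2 : ∀ (c : ℝ) (x : EuclideanSpace ℝ (Fin 3)), T (c • x) = |c| * T x)
    (hT3 : ∀ x y, T (x + y) ≤ T x + T y) :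
    ∃ C : ℝ, 0 ≤ C ∧ ∀ x, T x ≤ C * ‖x‖ := by
  set e : Fin 3 → EuclideanSpace ℝ (Fin 3) := fun i => EuclideanSpace.single i (1:ℝ)
  refine ⟨T (e 0) + T (e 1) + T (e 2), by
    have := hT0 (e 0); have := hT0 (e 1); have := hT0 (e 2); linarith, fun x => ?_⟩
  have hcoord : ∀ i, |x i| ≤ ‖x‖ := by
    intro i
    rw [EuclideanSpace.norm_eq, ← Real.sqrt_sq_eq_abs]
    apply Real.sqrt_le_sqrt
    calc (x i)^2 = ‖x i‖^2 := by rw [Real.norm_eq_abs, sq_abs]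
      _ ≤ ∑ j, ‖x j‖^2 :=
        Finset.single_le_sum (f := fun j => ‖x j‖^2) (fun j _ => by positivity)
          (Finset.mem_univ i)
  have hx : x = x 0 • e 0 + x 1 • e 1 + x 2 • e 2 := by
    ext j; fin_cases j <;> simp [e, EuclideanSpace.single_apply]
  calc T x ≤ T (x 0 • e 0 + x 1 • e 1) + T (x 2 • e 2) := by
        have h := hT3 (x 0 • e 0 + x 1 • e 1) (x 2 • e 2)
        rwa [← hx] at h
    _ ≤ T (x 0 • e 0) + T (x 1 • e 1) + T (x 2 • e 2) := by
        have := hT3 (x 0 • e 0) (x 1 • e 1); linarith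
    _ = |x 0| * T (e 0) + |x 1| * T (e 1) + |x 2| * T (e 2) := by rw [hT2, hT2, hT2]
    _ ≤ (T (e 0) + T (e 1) + T (e 2)) * ‖x‖ := by
        have h0 := hcoord 0; have h1 := hcoord 1; have h2 := hcoord 2
        have := hT0 (e 0); have := hT0 (e 1); have := hT0 (e 2)
        have hn : (0:ℝ) ≤ ‖x‖ := norm_nonneg x
        have hab : ∀ i, (0:ℝ) ≤ |x i| := fun i => abs_nonneg _
        nlinarith [hab 0, hab 1, hab 2]

/-- `coneMetric T` is differentiable at the origin with derivative `0`. -/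
lemma coneMetric_hasFDerivAt_zero (T : EuclideanSpace ℝ (Fin 3) → ℝ)
    (hT0 : ∀ x, 0 ≤ T x)
    (hT1 : ∀ x, T x = 0 ↔ x = 0)
    (hT2 : ∀ (c : ℝ) (x : EuclideanSpace ℝ (Fin 3)), T (c • x) = |c| * T x)
    (hT3 : ∀ x y, T (x + y) ≤ T x + T y) :
    HasFDerivAt (coneMetric T) (0 : EuclideanSpace ℝ (Fin 3) × ℝ →L[ℝ] ℝ) 0 := by
  obtain ⟨C, hC0, hC⟩ := norm_comparison T hT0 hT2 hT3
  rw [hasFDerivAt_iff_isLittleO_nhds_zero]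
  have hT0' : T 0 = 0 := (hT1 0).mpr rfl
  have hbig : (fun h : EuclideanSpace ℝ (Fin 3) × ℝ => coneMetric T (0 + h) - coneMetric T 0
        - (0 : EuclideanSpace ℝ (Fin 3) × ℝ →L[ℝ] ℝ) h)
      =O[nhds 0] fun h => ‖h‖ ^ 2 := by
    rw [Asymptotics.isBigO_iff]
    refine ⟨C^2 + 1, Filter.Eventually.of_forall fun h => ?_⟩
    simp only [zero_add, ContinuousLinearMap.zero_apply, sub_zero, coneMetric,
      Prod.fst_zero, Prod.snd_zero, hT0']
    have h1 : T h.1 ≤ C * ‖h.1‖ := hC h.1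
    have h1' : ‖h.1‖ ≤ ‖h‖ := norm_fst_le h
    have h2 : |h.2| ≤ ‖h‖ := by simpa [Real.norm_eq_abs] using norm_snd_le h
    have hTn : 0 ≤ T h.1 := hT0 h.1
    have hn : (0:ℝ) ≤ ‖h‖ := norm_nonneg h
    have hn1 : (0:ℝ) ≤ ‖h.1‖ := norm_nonneg h.1
    have h2sq : h.2 ^ 2 ≤ ‖h‖ ^ 2 := by nlinarith [sq_abs h.2, abs_nonneg h.2]
    have hT1'' : T h.1 ≤ C * ‖h‖ := h1.trans (by nlinarith)
    have hTsq : T h.1 ^ 2 ≤ C ^ 2 * ‖h‖ ^ 2 := by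
      nlinarith [mul_le_mul hT1'' hT1'' hTn (by positivity : (0:ℝ) ≤ C * ‖h‖)]
    have habs : |‖h‖ ^ 2| = ‖h‖ ^ 2 := abs_of_nonneg (by positivity)
    rw [Real.norm_eq_abs, Real.norm_eq_abs, habs, abs_le]
    constructor <;> nlinarith [sq_nonneg (T h.1), sq_nonneg ‖h‖]
  have hlit : (fun h : EuclideanSpace ℝ (Fin 3) × ℝ => ‖h‖ ^ 2)
      =o[nhds 0] fun h => h := Asymptotics.isLittleO_norm_pow_id one_lt_two
  simpa using hbig.trans_isLittleO hlit

/-- Derivative of a norm at a nonzero scaled point, in directions tangent to the surface. -/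
lemma fderiv_scaled_eq_zero (T : EuclideanSpace ℝ (Fin 3) → ℝ)
    (hT2 : ∀ (c : ℝ) (x : EuclideanSpace ℝ (Fin 3)), T (c • x) = |c| * T x)
    (hTdiff : ∀ x : EuclideanSpace ℝ (Fin 3), x ≠ 0 → DifferentiableAt ℝ T x)
    (x : EuclideanSpace ℝ (Fin 3)) (hx : x ≠ 0) (c : ℝ) (hc : c ≠ 0)
    (w : EuclideanSpace ℝ (Fin 3)) (hw : fderiv ℝ T x w = 0) :
    fderiv ℝ T (c • x) w = 0 := by
  have hcx : c • x ≠ 0 := smul_ne_zero hc hx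
  have h1 : HasFDerivAt (fun y => T (c • y))
      ((fderiv ℝ T (c • x)).comp (c • ContinuousLinearMap.id ℝ _)) x :=
    (hTdiff _ hcx).hasFDerivAt.comp x ((hasFDerivAt_id x).const_smul c)
  have h2 : HasFDerivAt (fun y => T (c • y)) (|c| • fderiv ℝ T x) x := by
    have h2' : HasFDerivAt (fun y => |c| • T y) (|c| • fderiv ℝ T x) x :=
      (hTdiff x hx).hasFDerivAt.const_smul |c|
    have : (fun y => |c| • T y) = fun y => T (c • y) := by
      funext y; rw [hT2 c y]; simp [smul_eq_mul]
    rwa [this] at h2'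
  have heq := h1.unique h2
  have := congrArg (fun (f : EuclideanSpace ℝ (Fin 3) →L[ℝ] ℝ) => f w) heq
  simp only [ContinuousLinearMap.comp_apply, ContinuousLinearMap.smul_apply,
    ContinuousLinearMap.coe_smul', Pi.smul_apply, ContinuousLinearMap.coe_id', id_eq,
    smul_eq_mul, map_smul] at this
  -- this : c * (fderiv ℝ T (c • x)) w = |c| * fderiv ℝ T x w (up to smul form)
  have hres : c * fderiv ℝ T (c • x) w = |c| * fderiv ℝ T x w := by
    simpa [smul_eq_mul] using this
  rw [hw, mul_zero] at hres
  exact (mul_eq_zero.mp hres).resolve_left hc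

/-- Lemma 3.1, first part: for any smooth `ρ`, the map
`Y = (X + ρ·ξ, ρ)` is an anisotropic sphere congruence enveloped by `X`:
`L(Y − (X,0)) ≡ 0` and `dL_{Y−(X,0)} ∘ d(X,0) ≡ 0`. -/
theorem sphere_congruence_enveloped
    (T : EuclideanSpace ℝ (Fin 3) → ℝ)
    (hT0 : ∀ x, 0 ≤ T x)
    (hT1 : ∀ x, T x = 0 ↔ x = 0)
    (hT2 : ∀ (c : ℝ) (x : EuclideanSpace ℝ (Fin 3)), T (c • x) = |c| * T x)
    (hT3 : ∀ x y, T (x + y) ≤ T x + T y)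
    (hTdiff : ∀ x : EuclideanSpace ℝ (Fin 3), x ≠ 0 → DifferentiableAt ℝ T x)
    (Ω : Set (EuclideanSpace ℝ (Fin 2))) (hOm : IsOpen Ω)
    (X : EuclideanSpace ℝ (Fin 2) → EuclideanSpace ℝ (Fin 3))
    (hX : ContDiffOn ℝ (⊤ : ℕ∞) X Ω)
    (hXimm : ∀ p ∈ Ω, Function.Injective (fderiv ℝ X p))
    (ξ : EuclideanSpace ℝ (Fin 2) → EuclideanSpace ℝ (Fin 3))
    (hξsmooth : ContDiffOn ℝ (⊤ : ℕ∞) ξ Ω)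
    (hξ1 : ∀ p ∈ Ω, T (ξ p) = 1)
    (horth : ∀ p ∈ Ω, (fderiv ℝ T (ξ p)).comp (fderiv ℝ X p) = 0)
    (ρ : EuclideanSpace ℝ (Fin 2) → ℝ)
    (hρ : ContDiffOn ℝ (⊤ : ℕ∞) ρ Ω) :
    ∀ p ∈ Ω,
      coneMetric T ((X p + ρ p • ξ p, ρ p) - (X p, (0 : ℝ))) = 0 ∧
      (fderiv ℝ (coneMetric T) ((X p + ρ p • ξ p, ρ p) - (X p, (0 : ℝ)))).comp
        (fderiv ℝ (fun q => ((X q, (0 : ℝ)) :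
          EuclideanSpace ℝ (Fin 3) × ℝ)) p) = 0 := by
  intro p hp
  have hdiff : (X p + ρ p • ξ p, ρ p) - (X p, (0:ℝ)) = (ρ p • ξ p, ρ p) := by
    simp [Prod.ext_iff]
  rw [hdiff]
  have hξne : ξ p ≠ 0 := by
    intro h
    have := hξ1 p hp
    rw [h, (hT1 0).mpr rfl] at this
    norm_num at this
  -- first part
  have part1 : coneMetric T (ρ p • ξ p, ρ p) = 0 := by
    simp only [coneMetric]
    rw [hT2, hξ1 p hp, mul_one, sq_abs, sub_self]
  refine ⟨part1, ?_⟩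
  -- derivative of q ↦ (X q, 0)
  have hXd : DifferentiableAt ℝ X p :=
    ((hX.contDiffAt (hOm.mem_nhds hp)).differentiableAt (by simp))
  have hXY : HasFDerivAt (fun q => ((X q, (0:ℝ)) : EuclideanSpace ℝ (Fin 3) × ℝ))
      ((fderiv ℝ X p).prod 0) p :=
    HasFDerivAt.prodMk hXd.hasFDerivAt (hasFDerivAt_const (0:ℝ) p)
  rw [hXY.fderiv]
  have horthv : ∀ v, fderiv ℝ T (ξ p) (fderiv ℝ X p v) = 0 := by
    intro v
    have := congrArg (fun (f : EuclideanSpace ℝ (Fin 2) →L[ℝ] ℝ) => f v) (horth p hp)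
    simpa using this
  by_cases hc : ρ p = 0
  · -- point is the origin; derivative of L there is 0
    have h0 : ((ρ p • ξ p, ρ p) : EuclideanSpace ℝ (Fin 3) × ℝ) = 0 := by
      simp [hc, Prod.ext_iff]
    rw [h0, (coneMetric_hasFDerivAt_zero T hT0 hT1 hT2 hT3).fderiv]
    ext v
    simp
  · -- point is away from the cone vertex
    have hq1 : ρ p • ξ p ≠ 0 := smul_ne_zero hc hξne
    set q : EuclideanSpace ℝ (Fin 3) × ℝ := (ρ p • ξ p, ρ p) with hq
    set D := fderiv ℝ T (ρ p • ξ p) with hD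
    have hf1 : HasFDerivAt (fun r : EuclideanSpace ℝ (Fin 3) × ℝ => T r.1)
        (D.comp (ContinuousLinearMap.fst ℝ _ _)) q :=
      (hTdiff _ hq1).hasFDerivAt.comp q (hasFDerivAt_fst)
    set F := D.comp (ContinuousLinearMap.fst ℝ (EuclideanSpace ℝ (Fin 3)) ℝ) with hF
    have hf2 : HasFDerivAt (fun r : EuclideanSpace ℝ (Fin 3) × ℝ => T r.1 * T r.1)
        (T q.1 • F + T q.1 • F) q := hf1.mul hf1
    have hg : HasFDerivAt (fun r : EuclideanSpace ℝ (Fin 3) × ℝ => r.2 * r.2)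
        (q.2 • ContinuousLinearMap.snd ℝ (EuclideanSpace ℝ (Fin 3)) ℝ +
         q.2 • ContinuousLinearMap.snd ℝ (EuclideanSpace ℝ (Fin 3)) ℝ) q :=
      hasFDerivAt_snd.mul hasFDerivAt_snd
    have hcone : coneMetric T = fun r : EuclideanSpace ℝ (Fin 3) × ℝ =>
        T r.1 * T r.1 - r.2 * r.2 := by
      funext r; simp [coneMetric, sq]
    have hL : HasFDerivAt (coneMetric T)
        ((T q.1 • F + T q.1 • F) -
          (q.2 • ContinuousLinearMap.snd ℝ (EuclideanSpace ℝ (Fin 3)) ℝ +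
           q.2 • ContinuousLinearMap.snd ℝ (EuclideanSpace ℝ (Fin 3)) ℝ)) q := by
      rw [hcone]; exact hf2.sub hg
    rw [hL.fderiv]
    ext v
    have hDv : D (fderiv ℝ X p v) = 0 :=
      fderiv_scaled_eq_zero T hT2 hTdiff (ξ p) hξne (ρ p) hc _ (horthv v)
    simp [ContinuousLinearMap.comp_apply, ContinuousLinearMap.prod_apply, F, hDv]
end

section
/- Let T be a norm on ℝ³ that is differentiable away from 0 and whose unit ball {T ≤ 1} is strictly convex, and let P ⊂ ℝ³ be a 2-dimensional linear subspace. Then there exists ξ₀ ∈ ℝ³ with T(ξ₀) = 1 such that fderiv T ξ₀ vanishes on P, and the set of all ξ with T(ξ) = 1 and fderiv T ξ vanishing on P is exactly {ξ₀, −ξ₀}. -/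
local notation "E3" => EuclideanSpace ℝ (Fin 3)

section Aux
variable (T : E3 → ℝ)
    (hT0 : ∀ x, 0 ≤ T x)
    (hT1 : ∀ x, T x = 0 ↔ x = 0)
    (hT2 : ∀ (c : ℝ) (x : E3), T (c • x) = |c| * T x)
    (hT3 : ∀ x y, T (x + y) ≤ T x + T y)

include hT0 hT2 hT3 in
lemma aux_cont : Continuous T := by
  have b := EuclideanSpace.basisFun (Fin 3) ℝ
  obtain ⟨C, hC0, hC⟩ : ∃ C : ℝ, 0 ≤ C ∧ ∀ x : E3, T x ≤ C * ‖x‖ := by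
    set b := EuclideanSpace.basisFun (Fin 3) ℝ
    refine ⟨∑ i, T (b i), Finset.sum_nonneg fun i _ => hT0 _, fun x => ?_⟩
    have hx : x = ∑ i, x i • (b i : E3) := by
      have := b.sum_repr x
      simpa [b, EuclideanSpace.basisFun_repr] using this.symm
    calc T x = T (∑ i, x i • (b i : E3)) := by rw [← hx]
      _ ≤ ∑ i, T (x i • (b i : E3)) := by
          rw [Fin.sum_univ_three, Fin.sum_univ_three]
          exact le_trans (hT3 _ _) (by gcongr; exact hT3 _ _)
      _ = ∑ i, |x i| * T (b i : E3) := by simp [hT2]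
      _ ≤ ∑ i, ‖x‖ * T (b i : E3) := by
          gcongr with i
          · exact hT0 _
          · have h := abs_real_inner_le_norm (EuclideanSpace.single i (1:ℝ)) x
            simpa [EuclideanSpace.inner_single_left, EuclideanSpace.norm_single] using h
      _ = (∑ i, T (b i : E3)) * ‖x‖ := by rw [← Finset.mul_sum, mul_comm]
  have hlip : LipschitzWith (Real.toNNReal C) T := by
    refine LipschitzWith.of_dist_le_mul fun x y => ?_
    rw [Real.dist_eq, Real.coe_toNNReal _ hC0, dist_eq_norm]
    have h1 : T x - T y ≤ T (x - y) := by
      have := hT3 (x - y) y; simpa using this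
    have h2 : T y - T x ≤ T (x - y) := by
      have := hT3 (y - x) x
      have hs : T (y - x) = T (x - y) := by
        have := hT2 (-1) (x - y); simpa [neg_sub] using this
      simp only [sub_add_cancel] at this
      linarith [hs ▸ this]
    calc |T x - T y| ≤ T (x - y) := abs_sub_le_iff.mpr ⟨h1, h2⟩
      _ ≤ C * ‖x - y‖ := hC _
  exact hlip.continuous

include hT0 hT1 hT2 hT3 in
lemma aux_lower : ∃ m : ℝ, 0 < m ∧ ∀ x : E3, m * ‖x‖ ≤ T x := by
  have hcont := aux_cont T hT0 hT2 hT3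
  have hsphere : IsCompact (Metric.sphere (0:E3) 1) := isCompact_sphere _ _
  have hne : (Metric.sphere (0:E3) 1).Nonempty := by
    exact NormedSpace.sphere_nonempty.mpr zero_le_one
  obtain ⟨x₀, hx₀mem, hx₀min⟩ := hsphere.exists_isMinOn hne hcont.continuousOn
  have hx₀ne : x₀ ≠ 0 := by
    intro h
    have : ‖x₀‖ = 1 := by simpa using hx₀mem
    simp [h] at this
  refine ⟨T x₀, lt_of_le_of_ne (hT0 _) fun h => hx₀ne ((hT1 x₀).mp h.symm), fun x => ?_⟩
  rcases eq_or_ne x 0 with rfl | hx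
  · simp [(hT1 (0:E3)).mpr rfl]
  · have hnx : ‖x‖ ≠ 0 := norm_ne_zero_iff.mpr hx
    have hmem : ‖x‖⁻¹ • x ∈ Metric.sphere (0:E3) 1 := by
      simp [norm_smul, abs_inv, abs_of_nonneg (norm_nonneg x), inv_mul_cancel₀ hnx]
    have hmin := hx₀min hmem
    have : T x = ‖x‖ * T (‖x‖⁻¹ • x) := by
      rw [hT2, abs_inv, abs_of_nonneg (norm_nonneg x)]
      field_simp
    rw [this]
    calc T x₀ * ‖x‖ ≤ T (‖x‖⁻¹ • x) * ‖x‖ := by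
          gcongr
          exact hmin
      _ = ‖x‖ * T (‖x‖⁻¹ • x) := mul_comm _ _

variable (hTdiff : ∀ x : E3, x ≠ 0 → DifferentiableAt ℝ T x)

include hT1 hT2 hTdiff in
lemma aux_euler {ξ : E3} (hξ : T ξ = 1) : fderiv ℝ T ξ ξ = 1 := by
  have hξne : ξ ≠ 0 := fun h => by simp [h, (hT1 (0:E3)).mpr rfl] at hξ
  have hd : HasFDerivAt T (fderiv ℝ T ξ) ξ := (hTdiff ξ hξne).hasFDerivAt
  have hline : HasDerivAt (fun t : ℝ => t • ξ) ξ 1 := by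
    simpa using (hasDerivAt_id (1:ℝ)).smul_const ξ
  have hd' : HasFDerivAt T (fderiv ℝ T ξ) ((1:ℝ) • ξ) := by simpa using hd
  have hcomp : HasDerivAt (fun t : ℝ => T (t • ξ)) (fderiv ℝ T ξ ξ) 1 :=
    hd'.comp_hasDerivAt 1 hline
  have heq : (fun t : ℝ => T (t • ξ)) =ᶠ[nhds (1:ℝ)] fun t => t * T ξ := by
    filter_upwards [Ioi_mem_nhds (show (0:ℝ) < 1 by norm_num)] with t ht
    rw [hT2, abs_of_pos ht]
  have hcomp' : HasDerivAt (fun t : ℝ => t * T ξ) (fderiv ℝ T ξ ξ) 1 :=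
    hcomp.congr_of_eventuallyEq heq.symm
  have hlin : HasDerivAt (fun t : ℝ => t * T ξ) (T ξ) 1 := by
    simpa using (hasDerivAt_id (1:ℝ)).mul_const (T ξ)
  have := hcomp'.unique hlin
  rw [this, hξ]

include hT1 hT2 hT3 hTdiff in
lemma aux_support {ξ : E3} (hξ : T ξ = 1) (y : E3) : fderiv ℝ T ξ y ≤ T y := by
  have hξne : ξ ≠ 0 := fun h => by simp [h, (hT1 (0:E3)).mpr rfl] at hξ
  have hd : HasFDerivAt T (fderiv ℝ T ξ) ξ := (hTdiff ξ hξne).hasFDerivAt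
  set L := fderiv ℝ T ξ with hL
  set g : ℝ → ℝ := fun t => T (ξ + t • (y - ξ)) with hg
  have hline : HasDerivAt (fun t : ℝ => ξ + t • (y - ξ)) (y - ξ) 0 := by
    simpa using ((hasDerivAt_id (0:ℝ)).smul_const (y - ξ)).const_add ξ
  have hd' : HasFDerivAt T L (ξ + (0:ℝ) • (y - ξ)) := by simpa using hd
  have hgd : HasDerivAt g (L (y - ξ)) 0 := hd'.comp_hasDerivAt 0 hline
  have hslope : ∀ t : ℝ, 0 < t → t < 1 → slope g 0 t ≤ T y - 1 := by
    intro t ht0 ht1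
    have hgt : g t ≤ (1 - t) + t * T y := by
      have : ξ + t • (y - ξ) = (1 - t) • ξ + t • y := by
        rw [smul_sub, sub_smul, one_smul]; abel
      rw [hg]; simp only []
      rw [this]
      calc T ((1 - t) • ξ + t • y) ≤ T ((1 - t) • ξ) + T (t • y) := hT3 _ _
        _ = (1 - t) + t * T y := by
            rw [hT2, hT2, abs_of_pos (by linarith), abs_of_pos ht0, hξ, mul_one]
    have hg0 : g 0 = 1 := by simp [hg, hξ]
    have hsl : slope g 0 t = (g t - 1) / t := by
      rw [slope_def_field, hg0]; ring_nf
    rw [hsl, div_le_iff₀ ht0]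
    nlinarith
  have hdw : HasDerivWithinAt g (L (y - ξ)) (Set.Ioi 0) 0 := hgd.hasDerivWithinAt
  have hset : Set.Ioi (0:ℝ) \ {0} = Set.Ioi 0 :=
    Set.diff_singleton_eq_self (by simp)
  have htend := hasDerivWithinAt_iff_tendsto_slope.mp hdw
  rw [hset] at htend
  have hle : L (y - ξ) ≤ T y - 1 := by
    refine le_of_tendsto htend ?_
    filter_upwards [Ioo_mem_nhdsGT_of_mem (Set.left_mem_Ico.mpr zero_lt_one)] with t ht
    exact hslope t ht.1 ht.2
  have heu : L ξ = 1 := aux_euler T hT1 hT2 hTdiff hξ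
  have : L (y - ξ) = L y - L ξ := map_sub L y ξ
  rw [this, heu] at hle
  linarith

include hT2 hTdiff in
lemma aux_fderiv_neg {ξ : E3} (hξne : ξ ≠ 0) (v : E3) :
    fderiv ℝ T (-ξ) v = -(fderiv ℝ T ξ v) := by
  have hd : HasFDerivAt T (fderiv ℝ T ξ) ξ := (hTdiff ξ hξne).hasFDerivAt
  have hneg : HasFDerivAt (fun x : E3 => -x) (-(ContinuousLinearMap.id ℝ E3)) (-ξ) :=
    (hasFDerivAt_id (-ξ)).neg
  have hd' : HasFDerivAt T (fderiv ℝ T ξ) ((fun x : E3 => -x) (-ξ)) := by simpa using hd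
  have hcomp := hd'.comp (-ξ) hneg
  have hTeq : (T ∘ fun x : E3 => -x) = T := by
    funext x
    have := hT2 (-1) x
    simpa using this
  rw [hTeq] at hcomp
  rw [hcomp.fderiv]
  simp

include hT1 hT2 hT3 hTdiff in
lemma aux_unique {ξ η : E3} (hξ : T ξ = 1) (hη : T η = 1)
    (hstrict : ∀ x y : E3, T x = 1 → T y = 1 → x ≠ y →
      ∀ t : ℝ, 0 < t → t < 1 → T (t • x + (1 - t) • y) < 1)
    (h1 : fderiv ℝ T ξ η = 1) : η = ξ := by
  by_contra hne
  have hm := hstrict ξ η hξ hη (fun h => hne h.symm) (1/2) (by norm_num) (by norm_num)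
  have hsup := aux_support T hT1 hT2 hT3 hTdiff hξ ((1/2 : ℝ) • ξ + (1 - 1/2 : ℝ) • η)
  have heu : fderiv ℝ T ξ ξ = 1 := aux_euler T hT1 hT2 hTdiff hξ
  rw [map_add, map_smul, map_smul] at hsup
  simp only [heu, h1, smul_eq_mul] at hsup
  norm_num at hsup
  linarith

end Aux

/-- For a norm `T` on ℝ³, differentiable away from `0` and with
strictly convex unit ball, and a 2-dimensional subspace `P`, there are exactly
two (antipodal) points of the Wulff shape `{T = 1}` where the derivative of `T`
annihilates `P`. -/
theorem two_antipodal_tangency_points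
    (T : EuclideanSpace ℝ (Fin 3) → ℝ)
    (hT0 : ∀ x, 0 ≤ T x)
    (hT1 : ∀ x, T x = 0 ↔ x = 0)
    (hT2 : ∀ (c : ℝ) (x : EuclideanSpace ℝ (Fin 3)), T (c • x) = |c| * T x)
    (hT3 : ∀ x y, T (x + y) ≤ T x + T y)
    (hTdiff : ∀ x : EuclideanSpace ℝ (Fin 3), x ≠ 0 → DifferentiableAt ℝ T x)
    (hstrict : ∀ x y : EuclideanSpace ℝ (Fin 3), T x = 1 → T y = 1 → x ≠ y →
      ∀ t : ℝ, 0 < t → t < 1 → T (t • x + (1 - t) • y) < 1)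
    (P : Submodule ℝ (EuclideanSpace ℝ (Fin 3)))
    (hP : Module.finrank ℝ P = 2) :
    ∃ ξ₀ : EuclideanSpace ℝ (Fin 3), T ξ₀ = 1 ∧
      (∀ v ∈ P, fderiv ℝ T ξ₀ v = 0) ∧
      {ξ : EuclideanSpace ℝ (Fin 3) | T ξ = 1 ∧ ∀ v ∈ P, fderiv ℝ T ξ v = 0} =
        {ξ₀, -ξ₀} := by
  have hcont := aux_cont T hT0 hT2 hT3
  have hT00 : T 0 = 0 := (hT1 0).mpr rfl
  -- P is a proper subspace, so its orthogonal complement is nontrivial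
  have hPtop : P ≠ ⊤ := by
    intro h
    rw [h, finrank_top] at hP
    rw [finrank_euclideanSpace_fin] at hP
    norm_num at hP
  obtain ⟨v, hvP, hvne⟩ : ∃ v : E3, v ∈ Pᗮ ∧ v ≠ 0 := by
    have : Pᗮ ≠ ⊥ := fun h => hPtop (Submodule.orthogonal_eq_bot_iff.mp h)
    obtain ⟨v, hv, hvne⟩ := Submodule.exists_mem_ne_zero_of_ne_bot this
    exact ⟨v, hv, hvne⟩
  set f : E3 → ℝ := fun x => inner ℝ v x with hf
  have hfcont : Continuous f := by
    exact Continuous.inner continuous_const continuous_id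
  have hfP : ∀ w ∈ P, f w = 0 := by
    intro w hw
    have := (Submodule.mem_orthogonal P v).mp hvP w hw
    rw [hf]; rw [real_inner_comm] at this; exact this
  -- the unit ball is compact
  obtain ⟨m, hm0, hm⟩ := aux_lower T hT0 hT1 hT2 hT3
  set K : Set E3 := {x | T x ≤ 1} with hK
  have hKclosed : IsClosed K := isClosed_le hcont continuous_const
  have hKbdd : Bornology.IsBounded K := by
    refine (isBounded_iff_forall_norm_le).mpr ⟨m⁻¹, fun x hx => ?_⟩
    have h1 : m * ‖x‖ ≤ 1 := le_trans (hm x) hx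
    rw [← le_div_iff₀' hm0] at h1
    simpa [one_div] using h1
  have hKcompact : IsCompact K := Metric.isCompact_of_isClosed_isBounded hKclosed hKbdd
  have hKne : K.Nonempty := ⟨0, by simp [hK, hT00]⟩
  obtain ⟨ξ₀, hξ₀K, hmax⟩ := hKcompact.exists_isMaxOn hKne hfcont.continuousOn
  -- f ξ₀ > 0
  have hTvne : T v ≠ 0 := fun h => hvne ((hT1 v).mp h)
  have hTvpos : 0 < T v := lt_of_le_of_ne (hT0 v) (Ne.symm hTvne)
  have hwK : (T v)⁻¹ • v ∈ K := by
    simp only [hK, Set.mem_setOf_eq, hT2, abs_inv, abs_of_pos hTvpos]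
    rw [inv_mul_cancel₀ hTvne]
  have hfw : 0 < f ((T v)⁻¹ • v) := by
    have hsm : f ((T v)⁻¹ • v) = (T v)⁻¹ * inner ℝ v v := real_inner_smul_right v v _
    rw [hsm]
    have : (0:ℝ) < inner ℝ v v := by
      rw [real_inner_self_eq_norm_mul_norm]
      exact mul_pos (norm_pos_iff.mpr hvne) (norm_pos_iff.mpr hvne)
    positivity
  have hfξ₀ : 0 < f ξ₀ := lt_of_lt_of_le hfw (hmax hwK)
  -- T ξ₀ = 1
  have hTξ₀ : T ξ₀ = 1 := by
    have hle1 : T ξ₀ ≤ 1 := hξ₀K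
    rcases lt_or_eq_of_le hle1 with hlt | heq
    · exfalso
      have hne0 : T ξ₀ ≠ 0 := by
        intro h
        have : ξ₀ = 0 := (hT1 ξ₀).mp h
        rw [this] at hfξ₀
        simp [hf] at hfξ₀
      have hpos : 0 < T ξ₀ := lt_of_le_of_ne (hT0 ξ₀) (Ne.symm hne0)
      have huK : (T ξ₀)⁻¹ • ξ₀ ∈ K := by
        simp only [hK, Set.mem_setOf_eq, hT2, abs_inv, abs_of_pos hpos]
        rw [inv_mul_cancel₀ hne0]
      have hfu : f ((T ξ₀)⁻¹ • ξ₀) = (T ξ₀)⁻¹ * f ξ₀ :=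
        real_inner_smul_right v ξ₀ _
      have hgt : f ξ₀ < (T ξ₀)⁻¹ * f ξ₀ := by
        have h1 : 1 < (T ξ₀)⁻¹ := (one_lt_inv₀ hpos).mpr hlt
        nlinarith
      have h2 : f ((T ξ₀)⁻¹ • ξ₀) ≤ f ξ₀ := hmax huK
      rw [hfu] at h2
      linarith
    · exact heq
  have hξ₀ne : ξ₀ ≠ 0 := fun h => by rw [h, hT00] at hTξ₀; norm_num at hTξ₀
  -- the derivative annihilates P
  have hann : ∀ w ∈ P, fderiv ℝ T ξ₀ w = 0 := by
    intro w hw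
    have hmin : ∀ t : ℝ, (1:ℝ) ≤ T (ξ₀ + t • w) := by
      intro t
      set z := ξ₀ + t • w with hz
      have hfz : f z = f ξ₀ := by
        have hvw : inner ℝ v w = (0:ℝ) := by
          have := (Submodule.mem_orthogonal P v).mp hvP w hw
          rwa [real_inner_comm] at this
        simp only [hf, hz, inner_add_right, real_inner_smul_right, hvw, mul_zero, add_zero]
      by_contra hlt
      push_neg at hlt
      have hzne : z ≠ 0 := by
        intro h
        rw [h] at hfz
        rw [show f (0:E3) = 0 from inner_zero_right v] at hfz
        rw [← hfz] at hfξ₀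
        exact lt_irrefl _ hfξ₀
      have hTzne : T z ≠ 0 := fun h => hzne ((hT1 z).mp h)
      have hTzpos : 0 < T z := lt_of_le_of_ne (hT0 z) (Ne.symm hTzne)
      have huK : (T z)⁻¹ • z ∈ K := by
        simp only [hK, Set.mem_setOf_eq, hT2, abs_inv, abs_of_pos hTzpos]
        rw [inv_mul_cancel₀ hTzne]
      have hfu : f ((T z)⁻¹ • z) = (T z)⁻¹ * f ξ₀ := by
        have hsm : f ((T z)⁻¹ • z) = (T z)⁻¹ * f z := real_inner_smul_right v z _
        rw [hsm, hfz]
      have h1 : 1 < (T z)⁻¹ := (one_lt_inv₀ hTzpos).mpr hlt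
      have h2 : f ((T z)⁻¹ • z) ≤ f ξ₀ := hmax huK
      rw [hfu] at h2
      nlinarith
    have hd : HasFDerivAt T (fderiv ℝ T ξ₀) (ξ₀ + (0:ℝ) • w) := by
      simpa using (hTdiff ξ₀ hξ₀ne).hasFDerivAt
    have hline : HasDerivAt (fun t : ℝ => ξ₀ + t • w) w 0 := by
      simpa using ((hasDerivAt_id (0:ℝ)).smul_const w).const_add ξ₀
    have hgd : HasDerivAt (fun t : ℝ => T (ξ₀ + t • w)) (fderiv ℝ T ξ₀ w) 0 :=
      hd.comp_hasDerivAt 0 hline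
    have hlm : IsLocalMin (fun t : ℝ => T (ξ₀ + t • w)) 0 := by
      apply Filter.Eventually.of_forall
      intro t
      simp only []
      rw [show ξ₀ + (0:ℝ) • w = ξ₀ by simp, hTξ₀]
      exact hmin t
    exact hlm.hasDerivAt_eq_zero hgd
  refine ⟨ξ₀, hTξ₀, hann, ?_⟩
  -- the kernel of the derivative is exactly P
  set L : E3 →L[ℝ] ℝ := fderiv ℝ T ξ₀ with hLdef
  have heul : L ξ₀ = 1 := aux_euler T hT1 hT2 hTdiff hTξ₀
  have hPker : P = LinearMap.ker (L : E3 →ₗ[ℝ] ℝ) := by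
    have hPle : P ≤ LinearMap.ker (L : E3 →ₗ[ℝ] ℝ) := by
      intro w hw
      simpa using hann w hw
    have hsurj : Function.Surjective (L : E3 →ₗ[ℝ] ℝ) := by
      intro y
      exact ⟨y • ξ₀, by simp [heul]⟩
    have hrange : LinearMap.range (L : E3 →ₗ[ℝ] ℝ) = ⊤ :=
      LinearMap.range_eq_top.mpr hsurj
    have hrank := LinearMap.finrank_range_add_finrank_ker (L : E3 →ₗ[ℝ] ℝ)
    rw [hrange, finrank_top, Module.finrank_self, finrank_euclideanSpace_fin] at hrank
    exact Submodule.eq_of_le_of_finrank_le hPle (by omega)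
  refine Set.eq_of_subset_of_subset ?_ ?_
  · rintro ξ ⟨hTξ, hannξ⟩
    have hξne : ξ ≠ 0 := fun h => by rw [h, hT00] at hTξ; norm_num at hTξ
    set M : E3 →L[ℝ] ℝ := fderiv ℝ T ξ with hMdef
    have heulM : M ξ = 1 := aux_euler T hT1 hT2 hTdiff hTξ
    set a : ℝ := L ξ with ha
    have hmemP : ξ - a • ξ₀ ∈ P := by
      rw [hPker]
      simp [LinearMap.mem_ker, heul, ha]
    have hMP : M (ξ - a • ξ₀) = 0 := hannξ _ hmemP
    have hab : a * M ξ₀ = 1 := by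
      rw [map_sub, map_smul] at hMP
      simp only [smul_eq_mul, heulM] at hMP
      linarith
    have hTnegξ : T (-ξ) = 1 := by
      have := hT2 (-1) ξ; simpa [hTξ] using this
    have hTnegξ₀ : T (-ξ₀) = 1 := by
      have := hT2 (-1) ξ₀; simpa [hTξ₀] using this
    have haabs : |a| ≤ 1 := by
      rw [abs_le]
      constructor
      · have := aux_support T hT1 hT2 hT3 hTdiff hTξ₀ (-ξ)
        rw [map_neg, hTnegξ] at this
        linarith
      · have := aux_support T hT1 hT2 hT3 hTdiff hTξ₀ ξ
        rw [hTξ] at this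
        exact this
    have hbabs : |M ξ₀| ≤ 1 := by
      rw [abs_le]
      constructor
      · have := aux_support T hT1 hT2 hT3 hTdiff hTξ (-ξ₀)
        rw [map_neg, hTnegξ₀] at this
        linarith
      · have := aux_support T hT1 hT2 hT3 hTdiff hTξ ξ₀
        rw [hTξ₀] at this
        exact this
    have haeq : |a| = 1 := by
      have h1 : 1 ≤ |a| * |M ξ₀| := by
        rw [← abs_mul, hab]; norm_num
      have h2 : |a| * |M ξ₀| ≤ |a| * 1 :=
        mul_le_mul_of_nonneg_left hbabs (abs_nonneg a)
      rw [mul_one] at h2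
      exact le_antisymm haabs (le_trans h1 h2)
    rcases (abs_eq zero_le_one).mp haeq with h1 | h1
    · -- a = 1 : ξ = ξ₀
      left
      exact aux_unique T hT1 hT2 hT3 hTdiff hTξ₀ hTξ hstrict (by show L ξ = 1; rw [← ha]; exact h1)
    · -- a = -1 : ξ = -ξ₀
      right
      have hLneg : L (-ξ) = 1 := by rw [map_neg, ← ha, h1]; norm_num
      have := aux_unique T hT1 hT2 hT3 hTdiff hTξ₀ hTnegξ hstrict hLneg
      simp only [Set.mem_singleton_iff]
      rw [← this]
      simp
  · rintro ξ (rfl | rfl)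
    · exact ⟨hTξ₀, hann⟩
    · refine ⟨by have := hT2 (-1) ξ₀; simpa [hTξ₀] using this, fun w hw => ?_⟩
      rw [aux_fderiv_neg T hT2 hTdiff hξ₀ne w, hann w hw]
      norm_num
end

section
/- (Huygens' principle for parallel surfaces.) Let T be a norm on ℝ³ differentiable away from 0, Σ ⊆ ℝ² open, X : Σ → ℝ³ a smooth immersion, and ξ : Σ → ℝ³ smooth with T(ξ(p)) = 1 and (fderiv T (ξ(p))) ∘ (fderiv X p) = 0 for all p. Fix t ∈ ℝ and let X̃ := X + t·ξ be the parallel surface. Then for all p ∈ Σ: (a) (fderiv T (ξ(p))) ∘ (fderiv X̃ p) = 0, so ξ is also the Cahn–Hoffman field of X̃; and (b) the congruence Y(p) := (X(p), t) of anisotropic spheres of radius t centered on X is enveloped by X̃, i.e. L((X(p),t) − (X̃(p),0)) = 0 and the derivative of L at the point (X(p),t) − (X̃(p),0) composed with fderiv X̃ p vanishes. -/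
/-- Huygens' principle for parallel surfaces: if `ξ` is the
Cahn–Hoffman field of `X`, then (a) `ξ` is also the Cahn–Hoffman field of the
parallel surface `X̃ = X + t·ξ`, and (b) the congruence `Y = (X, t)` of
anisotropic spheres of radius `t` centered on `X` is enveloped by `X̃`. -/
theorem huygens_principle_parallel_surface
    (T : EuclideanSpace ℝ (Fin 3) → ℝ)
    (hT0 : ∀ x, 0 ≤ T x)
    (hT1 : ∀ x, T x = 0 ↔ x = 0)
    (hT2 : ∀ (c : ℝ) (x : EuclideanSpace ℝ (Fin 3)), T (c • x) = |c| * T x)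
    (hT3 : ∀ x y, T (x + y) ≤ T x + T y)
    (hTdiff : ∀ x : EuclideanSpace ℝ (Fin 3), x ≠ 0 → DifferentiableAt ℝ T x)
    (Ω : Set (EuclideanSpace ℝ (Fin 2))) (hOm : IsOpen Ω)
    (X : EuclideanSpace ℝ (Fin 2) → EuclideanSpace ℝ (Fin 3))
    (hX : ContDiffOn ℝ (⊤ : ℕ∞) X Ω)
    (hXimm : ∀ p ∈ Ω, Function.Injective (fderiv ℝ X p))
    (ξ : EuclideanSpace ℝ (Fin 2) → EuclideanSpace ℝ (Fin 3))
    (hξsmooth : ContDiffOn ℝ (⊤ : ℕ∞) ξ Ω)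
    (hξ1 : ∀ p ∈ Ω, T (ξ p) = 1)
    (horth : ∀ p ∈ Ω, (fderiv ℝ T (ξ p)).comp (fderiv ℝ X p) = 0)
    (t : ℝ) :
    ∀ p ∈ Ω,
      -- (a) ξ is the Cahn–Hoffman field of the parallel surface X̃ = X + t·ξ
      (fderiv ℝ T (ξ p)).comp (fderiv ℝ (fun q => X q + t • ξ q) p) = 0 ∧
      -- (b) the congruence Y = (X, t) is enveloped by X̃
      coneMetric T ((X p, t) - (X p + t • ξ p, (0 : ℝ))) = 0 ∧
      (fderiv ℝ (coneMetric T) ((X p, t) - (X p + t • ξ p, (0 : ℝ)))).comp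
        (fderiv ℝ (fun q => ((X q + t • ξ q, (0 : ℝ)) :
          EuclideanSpace ℝ (Fin 3) × ℝ)) p) = 0 := by
  intro p hp
  have hpnhds : Ω ∈ nhds p := hOm.mem_nhds hp
  have hXd : DifferentiableAt ℝ X p :=
    ((hX.differentiableOn (by simp)).differentiableAt hpnhds)
  have hξd : DifferentiableAt ℝ ξ p :=
    ((hξsmooth.differentiableOn (by simp)).differentiableAt hpnhds)
  have hξp0 : ξ p ≠ 0 := by
    intro h
    have h1 := hξ1 p hp
    rw [h, (hT1 0).mpr rfl] at h1
    exact zero_ne_one h1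
  have hTd : DifferentiableAt ℝ T (ξ p) := hTdiff _ hξp0
  -- the derivative of ξ is annihilated by dT(ξ p)
  have hkey : (fderiv ℝ T (ξ p)).comp (fderiv ℝ ξ p) = 0 := by
    have hcomp : fderiv ℝ (T ∘ ξ) p = (fderiv ℝ T (ξ p)).comp (fderiv ℝ ξ p) :=
      fderiv_comp p hTd hξd
    have hconst : (T ∘ ξ) =ᶠ[nhds p] fun _ => (1 : ℝ) :=
      Filter.eventually_of_mem hpnhds fun q hq => hξ1 q hq
    rw [← hcomp, hconst.fderiv_eq, fderiv_fun_const]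
    rfl
  have hξsd : DifferentiableAt ℝ (fun q => t • ξ q) p := hξd.const_smul t
  have hXtd : DifferentiableAt ℝ (fun q => X q + t • ξ q) p := hXd.add hξsd
  have hfd : fderiv ℝ (fun q => X q + t • ξ q) p
      = fderiv ℝ X p + t • fderiv ℝ ξ p := by
    rw [fderiv_fun_add hXd hξsd, fderiv_fun_const_smul hξd]
  -- part (a)
  have ha : (fderiv ℝ T (ξ p)).comp (fderiv ℝ (fun q => X q + t • ξ q) p) = 0 := by
    ext v
    have h1 : (fderiv ℝ T (ξ p)) (fderiv ℝ X p v) = 0 := by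
      have := ContinuousLinearMap.ext_iff.mp (horth p hp) v
      simpa using this
    have h2 : (fderiv ℝ T (ξ p)) (fderiv ℝ ξ p v) = 0 := by
      have := ContinuousLinearMap.ext_iff.mp hkey v
      simpa using this
    simp [hfd, h1, h2]
  refine ⟨ha, ?_, ?_⟩
  · -- (b) part 1
    have hq0 : ((X p, t) - (X p + t • ξ p, (0 : ℝ))
        : EuclideanSpace ℝ (Fin 3) × ℝ) = ((-t) • ξ p, t) := by
      rw [Prod.mk_sub_mk]
      have h1 : X p - (X p + t • ξ p) = (-t) • ξ p := by
        rw [neg_smul]; abel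
      rw [h1, sub_zero]
    rw [hq0]
    simp only [coneMetric, hT2, hξ1 p hp, mul_one]
    rw [sq_abs]
    ring
  · -- (b) part 2
    have hq0 : ((X p, t) - (X p + t • ξ p, (0 : ℝ))
        : EuclideanSpace ℝ (Fin 3) × ℝ) = ((-t) • ξ p, t) := by
      rw [Prod.mk_sub_mk]
      have h1 : X p - (X p + t • ξ p) = (-t) • ξ p := by
        rw [neg_smul]; abel
      rw [h1, sub_zero]
    rw [hq0]
    -- derivative of the map into the congruence
    have hY : HasFDerivAt (fun q => ((X q + t • ξ q, (0 : ℝ)) :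
        EuclideanSpace ℝ (Fin 3) × ℝ))
        ((fderiv ℝ (fun q => X q + t • ξ q) p).prod 0) p :=
      HasFDerivAt.prodMk hXtd.hasFDerivAt (hasFDerivAt_const (0 : ℝ) p)
    rw [hY.fderiv]
    by_cases ht : t = 0
    · -- the metric is degenerate at the origin; whatever fderiv is, it is 0
      subst ht
      have h0 : ((-(0:ℝ)) • ξ p, (0:ℝ)) = ((0 : EuclideanSpace ℝ (Fin 3)), (0:ℝ)) := by
        simp
      rw [h0]
      have hD : fderiv ℝ (coneMetric T) ((0 : EuclideanSpace ℝ (Fin 3)), (0:ℝ)) = 0 := by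
        by_cases hd : DifferentiableAt ℝ (coneMetric T)
            ((0 : EuclideanSpace ℝ (Fin 3)), (0:ℝ))
        · apply ContinuousLinearMap.ext; intro u
          have hline := hd.hasFDerivAt.hasLineDerivAt u
          have heq : (fun τ : ℝ => coneMetric T
              (((0 : EuclideanSpace ℝ (Fin 3)), (0:ℝ)) + τ • u))
              = fun τ : ℝ => τ ^ 2 * ((T u.1) ^ 2 - u.2 ^ 2) := by
            funext τ
            simp only [coneMetric, Prod.smul_mk, Prod.fst_add, Prod.snd_add,
              Prod.smul_fst, Prod.smul_snd, Prod.fst_zero, Prod.snd_zero,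
              zero_add, smul_eq_mul, hT2]
            rw [mul_pow, sq_abs]
            ring
          have hline' : HasDerivAt (fun τ : ℝ => τ ^ 2 * ((T u.1) ^ 2 - u.2 ^ 2))
              (fderiv ℝ (coneMetric T) ((0 : EuclideanSpace ℝ (Fin 3)), (0:ℝ)) u) 0 := by
            have := hline
            unfold HasLineDerivAt at this
            rwa [heq] at this
          have hg : HasDerivAt (fun τ : ℝ => τ ^ 2 * ((T u.1) ^ 2 - u.2 ^ 2))
              ((2 * (0:ℝ) ^ 1) * ((T u.1) ^ 2 - u.2 ^ 2)) 0 :=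
            (hasDerivAt_pow 2 (0:ℝ)).mul_const _
          have := hline'.unique hg
          simpa using this
        · exact fderiv_zero_of_not_differentiableAt hd
      rw [hD]
      exact ContinuousLinearMap.zero_comp _
    · -- nondegenerate case
      set c : ℝ := -t with hc
      have hc0 : c ≠ 0 := neg_ne_zero.mpr ht
      have hx0 : c • ξ p ≠ 0 := smul_ne_zero hc0 hξp0
      -- homogeneity of dT
      have hhom : ∀ v, (fderiv ℝ T (c • ξ p)) v = (|c| / c) * (fderiv ℝ T (ξ p)) v := by
        intro v
        have h1 : HasFDerivAt (fun y => T (c • y))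
            ((fderiv ℝ T (c • ξ p)).comp (c • ContinuousLinearMap.id ℝ _)) (ξ p) :=
          (hTdiff _ hx0).hasFDerivAt.comp (ξ p) ((hasFDerivAt_id (ξ p)).const_smul c)
        have h2 : HasFDerivAt (fun y => T (c • y)) (|c| • fderiv ℝ T (ξ p)) (ξ p) := by
          have : (fun y => T (c • y)) = fun y => |c| * T y := funext fun y => hT2 c y
          rw [this]
          exact hTd.hasFDerivAt.const_mul |c|
        have h3 := h1.unique h2
        have h4 := ContinuousLinearMap.ext_iff.mp h3 v
        simp only [ContinuousLinearMap.comp_apply, ContinuousLinearMap.smul_apply,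
          ContinuousLinearMap.coe_smul', Pi.smul_apply, ContinuousLinearMap.coe_id',
          id_eq, smul_eq_mul] at h4
        have h5 : fderiv ℝ T (c • ξ p) (c • v) = |c| * fderiv ℝ T (ξ p) v := by
          simpa using h4
        rw [map_smul] at h5
        field_simp
        rw [mul_comm]
        simpa [smul_eq_mul] using h5
      -- derivative of the cone metric at the nonzero point
      have hA : HasFDerivAt (fun q : EuclideanSpace ℝ (Fin 3) × ℝ => T q.1)
          ((fderiv ℝ T (c • ξ p)).comp (ContinuousLinearMap.fst ℝ _ ℝ))
          ((c • ξ p, t) : EuclideanSpace ℝ (Fin 3) × ℝ) :=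
        (hTdiff _ hx0).hasFDerivAt.comp ((c • ξ p, t) : EuclideanSpace ℝ (Fin 3) × ℝ)
          (hasFDerivAt_fst (𝕜 := ℝ) (p := ((c • ξ p, t) : EuclideanSpace ℝ (Fin 3) × ℝ)))
      have hA2 := hA.mul hA
      have hB := (hasFDerivAt_snd (𝕜 := ℝ)
        (p := ((c • ξ p, t) : EuclideanSpace ℝ (Fin 3) × ℝ))).mul
        (hasFDerivAt_snd (𝕜 := ℝ) (p := ((c • ξ p, t) : EuclideanSpace ℝ (Fin 3) × ℝ)))
      have hLdef : coneMetric T = fun q : EuclideanSpace ℝ (Fin 3) × ℝ =>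
          T q.1 * T q.1 - q.2 * q.2 := by
        funext q
        simp [coneMetric, sq]
      have hL := hA2.sub hB
      rw [show ((fun q : EuclideanSpace ℝ (Fin 3) × ℝ => T q.1) * fun q => T q.1) - Prod.snd * Prod.snd
          = coneMetric T from by rw [hLdef]; rfl] at hL
      have hq0' : ((-t) • ξ p, t) = ((c • ξ p, t) : EuclideanSpace ℝ (Fin 3) × ℝ) := rfl
      rw [hq0', hL.fderiv]
      ext v
      have h1 : (fderiv ℝ T (ξ p)) (fderiv ℝ (fun q => X q + t • ξ q) p v) = 0 := by
        have := ContinuousLinearMap.ext_iff.mp ha v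
        simpa using this
      simp [ContinuousLinearMap.comp_apply, hhom, h1]
end

section
/- (Envelope condition for canal surfaces.) Let T be a norm on ℝ³ differentiable away from 0, let α = (⃗α, α₄) : I → ℝ³ × ℝ be a smooth curve on an open interval I with α₄(s) ≠ 0 for all s, and let ξ : I → ℝ³ be smooth with T(ξ(s)) = 1 for all s. Define X := ⃗α − α₄·ξ : I → ℝ³. Then for each s ∈ I, the envelope condition dL_{α(s) − (X(s),0)}(X′(s), 0) = 0 holds if and only if (fderiv T (ξ(s)))(⃗α′(s)) = α₄′(s). -/
open Set

local notation "E" => EuclideanSpace ℝ (Fin 3)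

/-- Homogeneity of the differential of a 1-homogeneous function. -/
lemma fderiv_norm_homog {T : E → ℝ}
    (hT2 : ∀ (c : ℝ) (x : E), T (c • x) = |c| * T x)
    (hTdiff : ∀ x : E, x ≠ 0 → DifferentiableAt ℝ T x)
    {c : ℝ} (hc : c ≠ 0) {x : E} (hx : x ≠ 0) :
    fderiv ℝ T (c • x) = (|c| / c) • fderiv ℝ T x := by
  have hcx : c • x ≠ 0 := smul_ne_zero hc hx
  have hD : HasFDerivAt T (fderiv ℝ T (c • x)) (c • x) := (hTdiff _ hcx).hasFDerivAt
  have hsm : HasFDerivAt (fun y : E => c • y) (c • ContinuousLinearMap.id ℝ E) x :=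
    (c • ContinuousLinearMap.id ℝ E).hasFDerivAt
  have h1 : HasFDerivAt (fun y : E => T (c • y))
      ((fderiv ℝ T (c • x)).comp (c • ContinuousLinearMap.id ℝ E)) x := hD.comp x hsm
  have h2 : HasFDerivAt (fun y : E => T (c • y)) (|c| • fderiv ℝ T x) x := by
    have := ((hTdiff x hx).hasFDerivAt).const_smul |c|
    apply this.congr_of_eventuallyEq
    filter_upwards with y
    simp [hT2, smul_eq_mul]
  have heq := h1.unique h2
  ext v
  have hv := congrArg (fun (f : E →L[ℝ] ℝ) => f v) heq
  simp only [ContinuousLinearMap.comp_apply, ContinuousLinearMap.smul_apply,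
    ContinuousLinearMap.id_apply, map_smul] at hv
  have hv' : c * fderiv ℝ T (c • x) v = |c| * fderiv ℝ T x v := by
    simpa [smul_eq_mul] using hv
  simp only [ContinuousLinearMap.smul_apply, smul_eq_mul]
  field_simp
  linarith [hv']

/-- Euler's relation for a 1-homogeneous function. -/
lemma fderiv_norm_euler {T : E → ℝ}
    (hT2 : ∀ (c : ℝ) (x : E), T (c • x) = |c| * T x)
    (hTdiff : ∀ x : E, x ≠ 0 → DifferentiableAt ℝ T x)
    {x : E} (hx : x ≠ 0) :
    fderiv ℝ T x x = T x := by
  have hg : HasDerivAt (fun c : ℝ => c • x) x 1 := by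
    simpa using (hasDerivAt_id (1:ℝ)).smul_const x
  have hD : HasFDerivAt T (fderiv ℝ T x) ((1:ℝ) • x) := by
    rw [one_smul]; exact (hTdiff x hx).hasFDerivAt
  have h1 : HasDerivAt (fun c : ℝ => T (c • x)) (fderiv ℝ T x x) 1 :=
    hD.comp_hasDerivAt 1 hg
  have h2 : HasDerivAt (fun c : ℝ => T (c • x)) (T x) 1 := by
    have hm : HasDerivAt (fun c : ℝ => c * T x) (T x) 1 := by
      simpa using (hasDerivAt_id (1:ℝ)).mul_const (T x)
    apply hm.congr_of_eventuallyEq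
    filter_upwards [Ioi_mem_nhds (zero_lt_one)] with c hc
    rw [hT2, abs_of_pos hc]
  exact h1.unique h2

/-- envelope condition for canal surfaces: for a curve
`α = (⃗α, α₄)` of anisotropic spheres with `α₄ ≠ 0` and `T∘ξ ≡ 1`, setting
`X = ⃗α − α₄·ξ`, the envelope condition `dL_{α−(X,0)}(X′,0) = 0` holds iff
`⟨ξ*, ⃗α′⟩ = α₄′`. -/
theorem canal_surface_envelope_condition
    (T : EuclideanSpace ℝ (Fin 3) → ℝ)
    (hT0 : ∀ x, 0 ≤ T x)
    (hT1 : ∀ x, T x = 0 ↔ x = 0)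
    (hT2 : ∀ (c : ℝ) (x : EuclideanSpace ℝ (Fin 3)), T (c • x) = |c| * T x)
    (hT3 : ∀ x y, T (x + y) ≤ T x + T y)
    (hTdiff : ∀ x : EuclideanSpace ℝ (Fin 3), x ≠ 0 → DifferentiableAt ℝ T x)
    (a b : ℝ)
    (αv : ℝ → EuclideanSpace ℝ (Fin 3)) (α₄ : ℝ → ℝ)
    (ξ : ℝ → EuclideanSpace ℝ (Fin 3))
    (hαv : ContDiffOn ℝ (⊤ : ℕ∞) αv (Ioo a b))
    (hα₄ : ContDiffOn ℝ (⊤ : ℕ∞) α₄ (Ioo a b))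
    (hξ : ContDiffOn ℝ (⊤ : ℕ∞) ξ (Ioo a b))
    (hα₄ne : ∀ s ∈ Ioo a b, α₄ s ≠ 0)
    (hξ1 : ∀ s ∈ Ioo a b, T (ξ s) = 1) :
    ∀ s ∈ Ioo a b,
      (fderiv ℝ (coneMetric T)
          ((αv s - (αv s - α₄ s • ξ s), α₄ s))
          (deriv (fun r => αv r - α₄ r • ξ r) s, (0 : ℝ)) = 0
        ↔ fderiv ℝ T (ξ s) (deriv αv s) = deriv α₄ s) := by
  intro s hs
  have hmem : Ioo a b ∈ nhds s := isOpen_Ioo.mem_nhds hs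
  have hαvd : DifferentiableAt ℝ αv s :=
    (hαv.contDiffAt hmem).differentiableAt (by simp)
  have hα₄d : DifferentiableAt ℝ α₄ s :=
    (hα₄.contDiffAt hmem).differentiableAt (by simp)
  have hξd : DifferentiableAt ℝ ξ s :=
    (hξ.contDiffAt hmem).differentiableAt (by simp)
  have hξ1s := hξ1 s hs
  have hξne : ξ s ≠ 0 := by
    intro h
    rw [h, (hT1 0).mpr rfl] at hξ1s
    norm_num at hξ1s
  have hc := hα₄ne s hs
  have hp1 : α₄ s • ξ s ≠ 0 := smul_ne_zero hc hξne
  -- derivative of T ∘ ξ vanishes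
  have hDξ' : fderiv ℝ T (ξ s) (deriv ξ s) = 0 := by
    have h1 : HasDerivAt (fun r => T (ξ r)) (fderiv ℝ T (ξ s) (deriv ξ s)) s :=
      ((hTdiff _ hξne).hasFDerivAt).comp_hasDerivAt s hξd.hasDerivAt
    have h2 : HasDerivAt (fun r => T (ξ r)) 0 s := by
      have heq : (fun r => T (ξ r)) =ᶠ[nhds s] fun _ => (1:ℝ) := by
        filter_upwards [hmem] with r hr using hξ1 r hr
      exact (hasDerivAt_const s (1:ℝ)).congr_of_eventuallyEq heq
    exact h1.unique h2
  have hEuler : fderiv ℝ T (ξ s) (ξ s) = 1 := by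
    rw [fderiv_norm_euler hT2 hTdiff hξne, hξ1s]
  -- derivative of X
  have hX : HasDerivAt (fun r => αv r - α₄ r • ξ r)
      (deriv αv s - (α₄ s • deriv ξ s + deriv α₄ s • ξ s)) s :=
    hαvd.hasDerivAt.sub (hα₄d.hasDerivAt.smul hξd.hasDerivAt)
  -- fderiv of cone metric
  have h1 : HasFDerivAt (fun q : E × ℝ => T q.1)
      ((fderiv ℝ T (α₄ s • ξ s)).comp (ContinuousLinearMap.fst ℝ E ℝ))
      (α₄ s • ξ s, α₄ s) :=
    ((hTdiff _ hp1).hasFDerivAt).comp (α₄ s • ξ s, α₄ s) hasFDerivAt_fst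
  have hsq : HasFDerivAt (fun q : E × ℝ => T q.1 ^ 2)
      ((2 * T (α₄ s • ξ s)) •
        ((fderiv ℝ T (α₄ s • ξ s)).comp (ContinuousLinearMap.fst ℝ E ℝ)))
      (α₄ s • ξ s, α₄ s) := by
    simp only [pow_two]
    rw [two_mul, add_smul]
    exact h1.mul h1
  have hsnd : HasFDerivAt (fun q : E × ℝ => q.2 ^ 2)
      ((2 * α₄ s) • ContinuousLinearMap.snd ℝ E ℝ) (α₄ s • ξ s, α₄ s) := by
    have hsnd1 : HasFDerivAt (fun q : E × ℝ => q.2) (ContinuousLinearMap.snd ℝ E ℝ)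
        (α₄ s • ξ s, α₄ s) := hasFDerivAt_snd
    simp only [pow_two]
    rw [two_mul, add_smul]
    exact hsnd1.mul hsnd1
  have hcone : HasFDerivAt (coneMetric T)
      ((2 * T (α₄ s • ξ s)) •
          ((fderiv ℝ T (α₄ s • ξ s)).comp (ContinuousLinearMap.fst ℝ E ℝ))
        - (2 * α₄ s) • ContinuousLinearMap.snd ℝ E ℝ)
      (α₄ s • ξ s, α₄ s) := hsq.sub hsnd
  have hpt : αv s - (αv s - α₄ s • ξ s) = α₄ s • ξ s := sub_sub_cancel _ _
  rw [hpt, hcone.fderiv, hX.deriv]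
  have hTp1 : T (α₄ s • ξ s) = |α₄ s| := by rw [hT2, hξ1s, mul_one]
  have hhom := fderiv_norm_homog hT2 hTdiff hc hξne
  simp only [ContinuousLinearMap.sub_apply, ContinuousLinearMap.smul_apply,
    ContinuousLinearMap.comp_apply, ContinuousLinearMap.coe_fst', ContinuousLinearMap.coe_snd',
    hhom, hTp1, smul_eq_mul, map_sub, map_add, map_smul, hEuler, hDξ']
  have habs : |α₄ s| ≠ 0 := abs_ne_zero.mpr hc
  constructor
  · intro h
    have hfac : (2 : ℝ) * |α₄ s| * (|α₄ s| / α₄ s) ≠ 0 :=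
      mul_ne_zero (mul_ne_zero two_ne_zero habs) (div_ne_zero habs hc)
    have h2 : (2 : ℝ) * |α₄ s| * (|α₄ s| / α₄ s) *
        (fderiv ℝ T (ξ s) (deriv αv s) - deriv α₄ s) = 0 := by
      rw [← h]; ring
    rcases mul_eq_zero.mp h2 with h' | h'
    · exact absurd h' hfac
    · linarith [h']
  · intro h
    rw [h]
    ring
end

section
/- (Gauge invariance of the Laguerre density under parallel translation.) Let F : ℝ² → ℝ³ be an injective linear map, e₁, e₂ a basis of ℝ², λ₁, λ₂ nonzero reals, and G : ℝ² → ℝ³ the linear map with G(eᵢ) = −λᵢ·F(eᵢ). Let t ∈ ℝ satisfy 1 − tλ₁ ≠ 0 and 1 − tλ₂ ≠ 0, and set F̃ := F + t·G. Then F̃ is injective, G(eᵢ) = −λ̃ᵢ·F̃(eᵢ) where λ̃ᵢ := λᵢ/(1 − tλᵢ), and consequently 1/λ̃ᵢ = 1/λᵢ − t for i = 1,2, so that 1/λ̃₁ − 1/λ̃₂ = 1/λ₁ − 1/λ₂. -/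
/-- gauge invariance of the Laguerre density: passing to the
parallel surface derivative `F̃ = F + tG` keeps `F̃` injective, replaces the
principal curvatures `λᵢ` by `λ̃ᵢ = λᵢ/(1 − tλᵢ)`, translates the curvature
radii `1/λᵢ` by `−t`, and leaves `1/λ₁ − 1/λ₂` unchanged. -/
theorem laguerre_density_gauge_invariant
    (F G : (Fin 2 → ℝ) →ₗ[ℝ] (Fin 3 → ℝ))
    (hF : Function.Injective F)
    (e : Module.Basis (Fin 2) ℝ (Fin 2 → ℝ))
    (lam : Fin 2 → ℝ) (hlam : ∀ i, lam i ≠ 0)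
    (hG : ∀ i, G (e i) = -(lam i) • F (e i))
    (t : ℝ) (ht : ∀ i, 1 - t * lam i ≠ 0) :
    Function.Injective (F + t • G) ∧
    (∀ i, G (e i) = -(lam i / (1 - t * lam i)) • (F + t • G) (e i)) ∧
    (∀ i, 1 / (lam i / (1 - t * lam i)) = 1 / lam i - t) ∧
    1 / (lam 0 / (1 - t * lam 0)) - 1 / (lam 1 / (1 - t * lam 1)) =
      1 / lam 0 - 1 / lam 1 := by
  have key : ∀ i, (F + t • G) (e i) = (1 - t * lam i) • F (e i) := by
    intro i
    simp [hG i, sub_smul, smul_smul, mul_comm]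
    module
  refine ⟨?_, ?_, ?_, ?_⟩
  · rw [injective_iff_map_eq_zero]
    intro x hx
    have hrepr : x = ∑ i, e.repr x i • e i := (e.sum_repr x).symm
    have hx2 : (∑ i, (e.repr x i * (1 - t * lam i)) • e i) = 0 := by
      apply hF
      rw [map_zero, map_sum]
      simp only [map_smul]
      calc ∑ i, (e.repr x i * (1 - t * lam i)) • F (e i)
          = (F + t • G) x := by
            conv_rhs => rw [hrepr]
            rw [map_sum]
            simp only [map_smul, key, smul_smul]
        _ = 0 := hx
    have hcoef := (Fintype.linearIndependent_iff.mp e.linearIndependent) _ hx2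
    have hzero : ∀ i, e.repr x i = 0 := by
      intro i
      have := hcoef i
      exact (mul_eq_zero.mp this).resolve_right (ht i)
    rw [hrepr]
    simp [hzero]
  · intro i
    rw [key i, hG i, smul_smul]
    congr 1
    rw [neg_mul, div_mul_cancel₀ _ (ht i)]
  · intro i
    rw [one_div_div]
    field_simp [hlam i]
  · rw [one_div_div, one_div_div]
    field_simp [hlam 0, hlam 1]
    ring
end
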